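/- For all σ ∈ S_n and r dividing n, |S(m_e^r, 1)| ≤ |S(m_σ^r, 1)|; that is, the identity multipermutation minimizes the r-regular Ulam sphere of radius 1. -/

import Mathlib

namespace UlamPaper

/-- Underlying function of the translocation `φ(i,j)` (0-indexed). -/
def tf (i j k : ℕ) : ℕ :=
  if i ≤ j then (if k < i ∨ j < k then k else if k = j then i else k + 1)
  else (if k < j ∨ i < k then k else if k = j then i else k - 1)

theorem tf_lt {n i j k : ℕ} (hi : i < n) (hj : j < n) (hk : k < n) : tf i j k < n := by
  unfold tf; split_ifs <;> omega

theorem tf_tf (i j k : ℕ) : tf j i (tf i j k) = k := by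
  unfold tf; split_ifs <;> omega

/-- The translocation `φ(i,j)` as a permutation of `Fin n`: it deletes the entry in
position `i` and reinserts it at position `j`, shifting intermediate entries. -/
def transloc {n : ℕ} (i j : Fin n) : Equiv.Perm (Fin n) where
  toFun k := ⟨tf i.val j.val k.val, tf_lt i.isLt j.isLt k.isLt⟩
  invFun k := ⟨tf j.val i.val k.val, tf_lt j.isLt i.isLt k.isLt⟩
  left_inv k := Fin.ext (tf_tf i.val j.val k.val)
  right_inv k := Fin.ext (tf_tf j.val i.val k.val)

/-- `IsTransloc φ` : `φ` is a translocation. -/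
def IsTransloc {n : ℕ} (φ : Equiv.Perm (Fin n)) : Prop := ∃ i j : Fin n, φ = transloc i j

/-- Length of the longest common subsequence of two `n`-length sequences. -/
noncomputable def lcsLen {n : ℕ} {α : Type*} (u v : Fin n → α) : ℕ :=
  sSup {k | ∃ f g : Fin k → Fin n, StrictMono f ∧ StrictMono g ∧ ∀ p, u (f p) = v (g p)}

/-- The Ulam distance `d(σ,π) = n - ℓ(σ,π)`. -/
noncomputable def ulamDist {n : ℕ} (σ π : Equiv.Perm (Fin n)) : ℕ :=
  n - lcsLen (⇑σ) (⇑π)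

/-- The `r`-regular multipermutation `m_σ^r` (with values in `[1, n/r]`). -/
def mult {n : ℕ} (r : ℕ) (σ : Equiv.Perm (Fin n)) : Fin n → ℕ :=
  fun i => (σ i).val / r + 1

/-- The `r`-regular Ulam distance, expressed as `n - ℓ(m_σ^r, m_π^r)`. -/
noncomputable def multDist {n : ℕ} (r : ℕ) (σ π : Equiv.Perm (Fin n)) : ℕ :=
  n - lcsLen (mult r σ) (mult r π)

/-- The `r`-regular Ulam sphere of radius `t` centered at `m_σ^r`. -/
def multSphere {n : ℕ} (r : ℕ) (σ : Equiv.Perm (Fin n)) (t : ℕ) : Set (Fin n → ℕ) :=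
  {x | ∃ π : Equiv.Perm (Fin n), x = mult r π ∧ multDist r σ π ≤ t}

/-! ### Evaluation lemmas for one-translocation moves -/

/-- The word obtained from `w` by moving the entry at position `i` to position `j`. -/
def mv {n : ℕ} (w : Fin n → ℕ) (i j : Fin n) : Fin n → ℕ := fun k => w (transloc i j k)

section MvLemmas

variable {n : ℕ} (w : Fin n → ℕ)

lemma transloc_val (i j k : Fin n) : (transloc i j k).val = tf i.val j.val k.val := rfl

lemma mv_out {i j k : Fin n} (h : k.val < min i.val j.val ∨ max i.val j.val < k.val) :
    mv w i j k = w k := by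
  unfold mv; congr 1; apply Fin.ext
  rw [transloc_val]; unfold tf; split_ifs <;> omega

lemma mv_at (i j : Fin n) : mv w i j j = w i := by
  unfold mv; congr 1; apply Fin.ext
  rw [transloc_val]; unfold tf; split_ifs <;> omega

lemma mv_right {i j k k' : Fin n} (h1 : i.val ≤ k.val) (h2 : k.val < j.val)
    (hk' : k'.val = k.val + 1) : mv w i j k = w k' := by
  unfold mv; congr 1; apply Fin.ext
  rw [transloc_val]; unfold tf; split_ifs <;> omega

lemma mv_left {i j k k' : Fin n} (h1 : j.val < k.val) (h2 : k.val ≤ i.val)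
    (hk' : k'.val + 1 = k.val) : mv w i j k = w k' := by
  unfold mv; congr 1; apply Fin.ext
  rw [transloc_val]; unfold tf; split_ifs <;> omega

lemma mv_self (i : Fin n) : mv w i i = w := by
  funext k
  unfold mv; congr 1; apply Fin.ext
  rw [transloc_val]; unfold tf; split_ifs <;> omega

end MvLemmas

/-! ### Counting infrastructure -/

section Counting

variable {n : ℕ} (w : Fin n → ℕ)

/-- `c` occurs strictly before position `p`. -/
def beforeP (p : Fin n) (c : ℕ) : Prop := ∃ k : Fin n, k.val < p.val ∧ w k = c

/-- `c` occurs strictly after position `p`. -/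
def afterP (p : Fin n) (c : ℕ) : Prop := ∃ k : Fin n, p.val < k.val ∧ w k = c

/-- every position after `p` that is weakly before some later occurrence of `c` carries `c`. -/
def tailP (p : Fin n) (c : ℕ) : Prop :=
  ∀ k₁ k₂ : Fin n, p.val < k₁.val → k₁.val ≤ k₂.val → w k₂ = c → w k₁ = c

def occP (c : ℕ) : Prop := ∃ k : Fin n, w k = c

variable (m : ℕ)

def goodP (p : Fin n) (c : ℕ) : Prop :=
  (1 ≤ c ∧ c ≤ m) ∧ c ≠ w p ∧ (beforeP w p c ∨ (afterP w p c ∧ ¬ tailP w p c))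

def badP (p : Fin n) (c : ℕ) : Prop :=
  (1 ≤ c ∧ c ≤ m) ∧ c ≠ w p ∧ ¬ beforeP w p c ∧ afterP w p c ∧ tailP w p c

noncomputable def lastOcc (c : ℕ) (h : occP w c) : Fin n :=
  (Finset.univ.filter fun k => w k = c).max'
    (by obtain ⟨k, hk⟩ := h; exact ⟨k, by simp [hk]⟩)

lemma lastOcc_spec (c : ℕ) (h : occP w c) : w (lastOcc w c h) = c := by
  have : lastOcc w c h ∈ Finset.univ.filter fun k => w k = c := Finset.max'_mem _ _
  simpa using this

lemma le_lastOcc {c : ℕ} (h : occP w c) {k : Fin n} (hk : w k = c) : k ≤ lastOcc w c h :=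
  Finset.le_max' _ _ (by simp [hk])

noncomputable def lastB (p : Fin n) (c : ℕ) (h : beforeP w p c) : Fin n :=
  (Finset.univ.filter fun k => k.val < p.val ∧ w k = c).max'
    (by obtain ⟨k, hk⟩ := h; exact ⟨k, by simp only [Finset.mem_filter, Finset.mem_univ, true_and]; exact hk⟩)

lemma lastB_spec (p : Fin n) (c : ℕ) (h : beforeP w p c) :
    (lastB w p c h).val < p.val ∧ w (lastB w p c h) = c := by
  have : lastB w p c h ∈ Finset.univ.filter fun k => k.val < p.val ∧ w k = c :=
    Finset.max'_mem _ _
  simpa only [Finset.mem_filter, Finset.mem_univ, true_and] using this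

lemma le_lastB {p : Fin n} {c : ℕ} (h : beforeP w p c) {k : Fin n}
    (h1 : k.val < p.val) (h2 : w k = c) : k ≤ lastB w p c h :=
  Finset.le_max' _ _ (by simp only [Finset.mem_filter, Finset.mem_univ, true_and]; exact ⟨h1, h2⟩)

/-- no occurrence of `c` strictly between `lastB` and `p`. -/
lemma lastB_max {p : Fin n} {c : ℕ} (h : beforeP w p c) {k : Fin n}
    (h1 : (lastB w p c h).val < k.val) (h2 : k.val < p.val) : w k ≠ c := by
  intro hk
  have := le_lastB w h h2 hk
  rw [Fin.le_def] at this
  omega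

open Classical in
/-- The canonical neighbour associated to a (good) pair `(p, c)`. -/
noncomputable def Phi : Fin n × ℕ → (Fin n → ℕ) := fun pc =>
  if h : beforeP w pc.1 pc.2 then mv w (lastB w pc.1 pc.2 h) pc.1
  else if h' : occP w pc.2 then mv w (lastOcc w pc.2 h') pc.1
  else w

end Counting
section Inj

variable {n : ℕ} {w : Fin n → ℕ}

/-- Crucial disjointness: a canonical "left move" never equals a canonical
"right move" coming from a good pair. -/
lemma LR_ne {p p' : Fin n} {c c' : ℕ}
    (hb : beforeP w p c) (hc : c ≠ w p)
    (hnb' : ¬ beforeP w p' c') (hnt' : ¬ tailP w p' c')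
    (hc' : c' ≠ w p') (ho' : occP w c') (hp'q0 : p'.val < (lastOcc w c' ho').val) :
    mv w (lastB w p c hb) p ≠ mv w (lastOcc w c' ho') p' := by
  intro heq
  set q := lastB w p c hb with hqdef
  set q' := lastOcc w c' ho' with hq'def
  obtain ⟨hq_lt, hq_w⟩ := lastB_spec w p c hb
  have hq'_w : w q' = c' := lastOcc_spec w c' ho'
  have hp'q' : p'.val < q'.val := hp'q0
  -- Step 0 : p ≤ q'
  have hpq' : p.val ≤ q'.val := by
    by_contra hcon
    push_neg at hcon
    have e1 : mv w q p p = w q := mv_at w q p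
    rw [heq, mv_out w (by omega)] at e1
    exact hc ((e1.trans hq_w).symm)
  -- Step 1 : q ≤ p' ≤ p
  have hqp' : q.val ≤ p'.val ∧ p'.val ≤ p.val := by
    by_contra hcon
    have e1 : mv w q p p' = w p' := mv_out w (by omega)
    rw [heq, mv_at w q' p'] at e1
    exact hc' (e1.symm.trans hq'_w).symm
  -- Step 2 : p' < p
  have hp'p : p'.val < p.val := by
    rcases Nat.lt_or_ge p'.val p.val with h | h
    · exact h
    · exfalso
      have hpp' : p' = p := Fin.ext (by omega)
      have e1 : mv w q p p' = w q := by rw [hpp']; exact mv_at w q p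
      rw [heq] at e1
      have e2 : w q' = w q := by rw [← mv_at w q' p', e1]
      have hcc : c' = c := by rw [← hq'_w, ← hq_w, e2]
      obtain ⟨k, hk1, hk2⟩ := hb
      exact hnb' ⟨k, by rw [hpp']; exact hk1, by rw [hk2, hcc]⟩
  -- Step 3 : q = p'
  have hqp'2 : q.val = p'.val := by
    rcases Nat.lt_or_ge q.val p'.val with h | h
    · exfalso
      have e1 : mv w q p q = w ⟨q.val + 1, by omega⟩ :=
        mv_right w (le_refl _) (by omega) rfl
      rw [heq, mv_out w (by omega)] at e1
      -- w q = w (q+1), and q+1 < p : contradicts maximality of lastB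
      exact lastB_max w hb (k := ⟨q.val + 1, by omega⟩)
        (by simp only [Fin.val_mk]; omega) (by simp only [Fin.val_mk]; omega)
        (e1.symm.trans hq_w)
    · omega
  -- Step 4
  rcases Nat.lt_or_ge (p'.val + 1) p.val with hpp2 | hpp1
  · -- p > p' + 1 : evaluate at p'+1
    have e1 : mv w q p ⟨p'.val + 1, by omega⟩ = w ⟨p'.val + 2, by omega⟩ :=
      mv_right w (by simp only [Fin.val_mk]; omega) (by simp only [Fin.val_mk]; omega)
        (by simp only [Fin.val_mk])
    have e2 : mv w q' p' ⟨p'.val + 1, by omega⟩ = w p' :=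
      mv_left w (by simp only [Fin.val_mk]; omega) (by simp only [Fin.val_mk]; omega)
        (by simp only [Fin.val_mk])
    rw [heq, e2] at e1
    -- w p' = w (p'+2) ; also w p' = w q = c
    have hwp' : w p' = c := by
      have : q = p' := Fin.ext hqp'2
      rw [← this, hq_w]
    rcases Nat.lt_or_ge (p'.val + 2) p.val with h2 | h2
    · exact lastB_max w hb (k := ⟨p'.val + 2, by omega⟩)
        (by simp only [Fin.val_mk]; omega) (by simp only [Fin.val_mk]; omega)
        (e1.symm.trans hwp')
    · have hp2 : p = ⟨p'.val + 2, by omega⟩ := Fin.ext (by simp only [Fin.val_mk]; omega)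
      exact hc (by rw [hp2, e1.symm, hwp'])
  · -- p = p' + 1 : derive that w is constant ≡ c' on [p, q'], contradicting ¬tailP
    have hconst : ∀ d : ℕ, ∀ k : Fin n, q'.val - k.val = d → p.val ≤ k.val →
        k.val ≤ q'.val → w k = c' := by
      intro d
      induction d with
      | zero =>
        intro k hk _ hk2
        have : k = q' := Fin.ext (by omega)
        rw [this, hq'_w]
      | succ d ih =>
        intro k hk hk1 hk2
        have hk3 : k.val < q'.val := by omega
        have e1 : mv w q p ⟨k.val + 1, by omega⟩ = w ⟨k.val + 1, by omega⟩ :=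
          mv_out w (by simp only [Fin.val_mk]; omega)
        have e2 : mv w q' p' ⟨k.val + 1, by omega⟩ = w k :=
          mv_left w (by simp only [Fin.val_mk]; omega) (by simp only [Fin.val_mk]; omega)
            (by simp only [Fin.val_mk])
        rw [heq, e2] at e1
        rw [e1]
        exact ih ⟨k.val + 1, by omega⟩ (by simp only [Fin.val_mk]; omega)
          (by simp only [Fin.val_mk]; omega) (by simp only [Fin.val_mk]; omega)
    apply hnt'
    intro k₁ k₂ h1 h2 hk₂
    have hk₂q' : k₂.val ≤ q'.val := by
      have := le_lastOcc w ho' hk₂; rw [Fin.le_def] at this; exact this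
    exact hconst (q'.val - k₁.val) k₁ rfl (by omega) (by omega)

end Inj
section Inj2

variable {n : ℕ} {w : Fin n → ℕ} {m : ℕ}

lemma afterP_occ {p : Fin n} {c : ℕ} (h : afterP w p c) : occP w c := by
  obtain ⟨k, _, hk⟩ := h; exact ⟨k, hk⟩

lemma afterP_lt_lastOcc {p : Fin n} {c : ℕ} (h : afterP w p c) (ho : occP w c) :
    p.val < (lastOcc w c ho).val := by
  obtain ⟨k, hk1, hk2⟩ := h
  have := le_lastOcc w ho hk2
  rw [Fin.le_def] at this; omega

open Classical in
lemma Phi_before {p : Fin n} {c : ℕ} (h : beforeP w p c) :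
    Phi w (p, c) = mv w (lastB w p c h) p := by
  unfold Phi; rw [dif_pos h]

open Classical in
lemma Phi_after {p : Fin n} {c : ℕ} (hnb : ¬ beforeP w p c) (ho : occP w c) :
    Phi w (p, c) = mv w (lastOcc w c ho) p := by
  unfold Phi; rw [dif_neg hnb, dif_pos ho]

lemma phi_inj {p p' : Fin n} {c c' : ℕ} (hg : goodP w m p c) (hg' : goodP w m p' c')
    (heq : Phi w (p, c) = Phi w (p', c')) : p = p' ∧ c = c' := by
  obtain ⟨-, hc, halt⟩ := hg
  obtain ⟨-, hc', halt'⟩ := hg'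
  by_cases hb : beforeP w p c <;> by_cases hb' : beforeP w p' c'
  · -- both left moves
    rw [Phi_before hb, Phi_before hb'] at heq
    obtain ⟨hq, hqw⟩ := lastB_spec w p c hb
    obtain ⟨hq', hqw'⟩ := lastB_spec w p' c' hb'
    have hpp : p = p' := by
      rcases Nat.lt_trichotomy p.val p'.val with h | h | h
      · exfalso
        have e : mv w (lastB w p c hb) p p' = w p' := mv_out w (by omega)
        rw [heq, mv_at] at e
        exact hc' (e.symm.trans hqw').symm
      · exact Fin.ext h
      · exfalso
        have e : mv w (lastB w p' c' hb') p' p = w p := mv_out w (by omega)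
        rw [← heq, mv_at] at e
        exact hc (e.symm.trans hqw).symm
    subst hpp
    refine ⟨rfl, ?_⟩
    have e : mv w (lastB w p c hb) p p = w (lastB w p c hb) := mv_at w _ p
    rw [heq, mv_at] at e
    rw [← hqw, ← hqw']
    exact e.symm
  · -- left vs right
    rcases halt' with hb2 | ⟨ha', hnt'⟩
    · exact absurd hb2 hb'
    exfalso
    have ho' : occP w c' := afterP_occ ha'
    rw [Phi_before hb, Phi_after hb' ho'] at heq
    exact LR_ne hb hc hb' hnt' hc' ho' (afterP_lt_lastOcc ha' ho') heq
  · -- right vs left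
    rcases halt with hb2 | ⟨ha, hnt⟩
    · exact absurd hb2 hb
    exfalso
    have ho : occP w c := afterP_occ ha
    rw [Phi_before hb', Phi_after hb ho] at heq
    exact LR_ne hb' hc' hb hnt hc ho (afterP_lt_lastOcc ha ho) heq.symm
  · -- both right moves
    rcases halt with hb2 | ⟨ha, hnt⟩
    · exact absurd hb2 hb
    rcases halt' with hb2 | ⟨ha', hnt'⟩
    · exact absurd hb2 hb'
    have ho : occP w c := afterP_occ ha
    have ho' : occP w c' := afterP_occ ha'
    have hpq : p.val < (lastOcc w c ho).val := afterP_lt_lastOcc ha ho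
    have hpq' : p'.val < (lastOcc w c' ho').val := afterP_lt_lastOcc ha' ho'
    rw [Phi_after hb ho, Phi_after hb' ho'] at heq
    have hpp : p = p' := by
      rcases Nat.lt_trichotomy p.val p'.val with h | h | h
      · exfalso
        have e : mv w (lastOcc w c' ho') p' p = w p := mv_out w (by omega)
        rw [← heq, mv_at] at e
        exact hc (e.symm.trans (lastOcc_spec w c ho)).symm
      · exact Fin.ext h
      · exfalso
        have e : mv w (lastOcc w c ho) p p' = w p' := mv_out w (by omega)
        rw [heq, mv_at] at e
        exact hc' (e.symm.trans (lastOcc_spec w c' ho')).symm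
    subst hpp
    refine ⟨rfl, ?_⟩
    have e : mv w (lastOcc w c ho) p p = w (lastOcc w c ho) := mv_at w _ p
    rw [heq, mv_at] at e
    rw [← lastOcc_spec w c ho, ← lastOcc_spec w c' ho']
    exact e.symm

lemma phi_ne_w {p : Fin n} {c : ℕ} (hg : goodP w m p c) : Phi w (p, c) ≠ w := by
  obtain ⟨-, hc, halt⟩ := hg
  intro h
  by_cases hb : beforeP w p c
  · have e : Phi w (p, c) p = w (lastB w p c hb) := by rw [Phi_before hb]; exact mv_at w _ p
    rw [h, (lastB_spec w p c hb).2] at e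
    exact hc e.symm
  · rcases halt with hb2 | ⟨ha, _⟩
    · exact absurd hb2 hb
    have ho : occP w c := afterP_occ ha
    have e : Phi w (p, c) p = w (lastOcc w c ho) := by rw [Phi_after hb ho]; exact mv_at w _ p
    rw [h, lastOcc_spec w c ho] at e
    exact hc e.symm

lemma phi_mem_range {p : Fin n} {c : ℕ} (hg : goodP w m p c) :
    Phi w (p, c) ∈ Set.range (fun ij : Fin n × Fin n => mv w ij.1 ij.2) := by
  obtain ⟨-, hc, halt⟩ := hg
  by_cases hb : beforeP w p c
  · exact ⟨(lastB w p c hb, p), (Phi_before hb).symm⟩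
  · rcases halt with hb2 | ⟨ha, _⟩
    · exact absurd hb2 hb
    have ho : occP w c := afterP_occ ha
    exact ⟨(lastOcc w c ho, p), (Phi_after hb ho).symm⟩

end Inj2
section Count2

variable {n : ℕ} (w : Fin n → ℕ) (m : ℕ)

open Classical in
noncomputable def goodF : Finset (Fin n × ℕ) :=
  (Finset.univ ×ˢ Finset.Icc 1 m).filter (fun pc => goodP w m pc.1 pc.2)

open Classical in
noncomputable def badF : Finset (Fin n × ℕ) :=
  (Finset.univ ×ˢ Finset.Icc 1 m).filter (fun pc => badP w m pc.1 pc.2)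

lemma mem_goodF {pc : Fin n × ℕ} : pc ∈ goodF w m ↔ goodP w m pc.1 pc.2 := by
  classical
  constructor
  · intro h
    exact (Finset.mem_filter.1 h).2
  · intro h
    refine Finset.mem_filter.2 ⟨Finset.mem_product.2 ⟨Finset.mem_univ _, ?_⟩, h⟩
    exact Finset.mem_Icc.2 h.1

lemma mem_badF {pc : Fin n × ℕ} : pc ∈ badF w m ↔ badP w m pc.1 pc.2 := by
  classical
  constructor
  · intro h
    exact (Finset.mem_filter.1 h).2
  · intro h
    refine Finset.mem_filter.2 ⟨Finset.mem_product.2 ⟨Finset.mem_univ _, ?_⟩, h⟩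
    exact Finset.mem_Icc.2 h.1

lemma partition_card (hval : ∀ p, 1 ≤ w p ∧ w p ≤ m)
    (hocc : ∀ c, 1 ≤ c → c ≤ m → occP w c) :
    (goodF w m).card + ((badF w m).card + n) = n * m := by
  classical
  have htot : (Finset.univ ×ˢ Finset.Icc 1 m : Finset (Fin n × ℕ)).card = n * m := by
    rw [Finset.card_product, Finset.card_univ, Fintype.card_fin, Nat.card_Icc,
      Nat.add_sub_cancel]
  have hsplit := Finset.card_filter_add_card_filter_not
    (s := (Finset.univ ×ˢ Finset.Icc 1 m : Finset (Fin n × ℕ)))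
    (p := fun pc => goodP w m pc.1 pc.2)
  have hneg : (Finset.univ ×ˢ Finset.Icc 1 m).filter
      (fun pc : Fin n × ℕ => ¬ goodP w m pc.1 pc.2) =
      (badF w m) ∪ ((Finset.univ ×ˢ Finset.Icc 1 m).filter
        (fun pc : Fin n × ℕ => pc.2 = w pc.1)) := by
    ext ⟨p, c⟩
    constructor
    · intro h
      obtain ⟨hmem, hng⟩ := Finset.mem_filter.1 h
      have hic : 1 ≤ c ∧ c ≤ m :=
        Finset.mem_Icc.1 (Finset.mem_product.1 hmem).2
      by_cases hdg : c = w p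
      · exact Finset.mem_union_right _ (Finset.mem_filter.2 ⟨hmem, hdg⟩)
      refine Finset.mem_union_left _ ((mem_badF w m).2 ?_)
      have hnb : ¬ beforeP w p c := fun hbf => hng ⟨hic, hdg, Or.inl hbf⟩
      have haf : afterP w p c := by
        obtain ⟨k, hk⟩ := hocc c hic.1 hic.2
        rcases Nat.lt_trichotomy k.val p.val with hlt | heq2 | hgt
        · exact absurd ⟨k, hlt, hk⟩ hnb
        · exfalso; apply hdg; rw [← hk]; congr 1; exact Fin.ext heq2
        · exact ⟨k, hgt, hk⟩
      have ht : tailP w p c := by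
        by_contra hnt
        exact hng ⟨hic, hdg, Or.inr ⟨haf, hnt⟩⟩
      exact ⟨hic, hdg, hnb, haf, ht⟩
    · intro h
      rcases Finset.mem_union.1 h with hbd | hdg
      · obtain ⟨hic, hdg, hnb, haf, ht⟩ := (mem_badF w m).1 hbd
        refine Finset.mem_filter.2 ⟨Finset.mem_product.2
          ⟨Finset.mem_univ _, Finset.mem_Icc.2 hic⟩, ?_⟩
        rintro ⟨-, -, hbf | ⟨-, hnt⟩⟩
        · exact hnb hbf
        · exact hnt ht
      · obtain ⟨hmem, hdg⟩ := Finset.mem_filter.1 hdg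
        exact Finset.mem_filter.2 ⟨hmem, fun hg => hg.2.1 hdg⟩
  have hdisj : Disjoint (badF w m) ((Finset.univ ×ˢ Finset.Icc 1 m).filter
      (fun pc : Fin n × ℕ => pc.2 = w pc.1)) := by
    rw [Finset.disjoint_left]
    intro pc hbd hdg
    exact ((mem_badF w m).1 hbd).2.1 (Finset.mem_filter.1 hdg).2
  have hdiag : ((Finset.univ ×ˢ Finset.Icc 1 m).filter
      (fun pc : Fin n × ℕ => pc.2 = w pc.1)).card = n := by
    have himg : ((Finset.univ ×ˢ Finset.Icc 1 m).filter
        (fun pc : Fin n × ℕ => pc.2 = w pc.1)) =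
        Finset.univ.image (fun p : Fin n => (p, w p)) := by
      ext ⟨p, c⟩
      constructor
      · intro h
        have h2 : c = w p := (Finset.mem_filter.1 h).2
        exact Finset.mem_image.2 ⟨p, Finset.mem_univ _, by rw [h2]⟩
      · intro h
        obtain ⟨q, -, hq⟩ := Finset.mem_image.1 h
        have h1 : q = p := congrArg Prod.fst hq
        have h2 : w q = c := congrArg Prod.snd hq
        subst h1
        refine Finset.mem_filter.2 ⟨Finset.mem_product.2
          ⟨Finset.mem_univ _, Finset.mem_Icc.2 (h2 ▸ hval q)⟩, h2.symm⟩
    rw [himg, Finset.card_image_of_injective _ (fun a b hab => congrArg Prod.fst hab),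
      Finset.card_univ, Fintype.card_fin]
  have hx : ((Finset.univ ×ˢ Finset.Icc 1 m).filter
      (fun pc : Fin n × ℕ => ¬ goodP w m pc.1 pc.2)).card = (badF w m).card + n := by
    rw [hneg, Finset.card_union_of_disjoint hdisj, hdiag]
  rw [hx] at hsplit
  rw [← htot]
  rw [goodF]
  exact hsplit

lemma badF_card_le (hval : ∀ p, 1 ≤ w p ∧ w p ≤ m) (hn : 0 < n) :
    (badF w m).card ≤ m - 1 := by
  classical
  have hinj : ∀ pc ∈ badF w m, ∀ pc' ∈ badF w m,
      (pc : Fin n × ℕ).2 = (pc' : Fin n × ℕ).2 → pc = pc' := by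
    rintro ⟨p, c⟩ hpc ⟨p', c'⟩ hpc' (h : c = c')
    subst h
    obtain ⟨-, hcp, hnb, haf, ht⟩ := (mem_badF w m).1 hpc
    obtain ⟨-, hcp', hnb', haf', ht'⟩ := (mem_badF w m).1 hpc'
    dsimp only at hcp hnb haf ht hcp' hnb' haf' ht'
    have hpp : p = p' := by
      rcases Nat.lt_trichotomy p.val p'.val with h | h | h
      · exfalso
        obtain ⟨k, hk1, hk2⟩ := haf'
        exact hcp' (ht p' k h (by omega) hk2).symm
      · exact Fin.ext h
      · exfalso
        obtain ⟨k, hk1, hk2⟩ := haf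
        exact hcp (ht' p k h (by omega) hk2).symm
    rw [hpp]
  have hmaps : ∀ pc ∈ badF w m, (pc : Fin n × ℕ).2 ∈ (Finset.Icc 1 m).erase (w ⟨0, hn⟩) := by
    rintro ⟨p, c⟩ hpc
    obtain ⟨hic, hcp, hnb, haf, ht⟩ := (mem_badF w m).1 hpc
    refine Finset.mem_erase.2 ⟨?_, Finset.mem_Icc.2 hic⟩
    intro hc0
    rcases Nat.eq_zero_or_pos p.val with h | h
    · apply hcp; rw [hc0]; congr 1; exact Fin.ext h.symm
    · exact hnb ⟨⟨0, hn⟩, h, hc0.symm⟩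
  have hcard := Finset.card_le_card_of_injOn (f := fun pc : Fin n × ℕ => pc.2)
    (fun pc hpc => hmaps pc hpc) (fun pc hpc pc' hpc' h => hinj pc hpc pc' hpc' h)
  have hw0 : w ⟨0, hn⟩ ∈ Finset.Icc 1 m := Finset.mem_Icc.2 (hval ⟨0, hn⟩)
  calc (badF w m).card ≤ ((Finset.Icc 1 m).erase (w ⟨0, hn⟩)).card := hcard
    _ = m - 1 := by rw [Finset.card_erase_of_mem hw0, Nat.card_Icc]; omega

end Count2
section Bounds

variable {n : ℕ} {w : Fin n → ℕ} {m : ℕ}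

/-- The set of words obtained from `w` by one translocation. -/
def moveRange (w : Fin n → ℕ) : Set (Fin n → ℕ) :=
  Set.range (fun ij : Fin n × Fin n => mv w ij.1 ij.2)

lemma moveRange_finite (w : Fin n → ℕ) : (moveRange w).Finite := Set.finite_range _

lemma w_mem_moveRange (hn : 0 < n) : w ∈ moveRange w :=
  ⟨(⟨0, hn⟩, ⟨0, hn⟩), mv_self w _⟩

lemma range_ncard_ge (hn : 0 < n) :
    1 + (goodF w m).card ≤ (moveRange w).ncard := by
  classical
  have hgsub : Phi w '' ↑(goodF w m) ⊆ moveRange w := by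
    rintro x ⟨pc, hpc, rfl⟩
    obtain ⟨p, c⟩ := pc
    exact phi_mem_range ((mem_goodF w m).1 hpc)
  have hsub : insert w (Phi w '' ↑(goodF w m)) ⊆ moveRange w :=
    Set.insert_subset (w_mem_moveRange hn) hgsub
  have hfinimg : (Phi w '' ↑(goodF w m)).Finite :=
    ((goodF w m).finite_toSet).image _
  have hnotmem : w ∉ Phi w '' ↑(goodF w m) := by
    rintro ⟨pc, hpc, heq⟩
    obtain ⟨p, c⟩ := pc
    exact phi_ne_w ((mem_goodF w m).1 hpc) heq
  have himg : (Phi w '' ↑(goodF w m)).ncard = (goodF w m).card := by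
    rw [Set.ncard_image_of_injOn, Set.ncard_coe_finset]
    rintro ⟨p, c⟩ hpc ⟨p', c'⟩ hpc' heq
    
    obtain ⟨h1, h2⟩ := phi_inj ((mem_goodF w m).1 hpc) ((mem_goodF w m).1 hpc') heq
    rw [Prod.ext_iff]
    exact ⟨h1, h2⟩
  have : (insert w (Phi w '' ↑(goodF w m))).ncard = 1 + (goodF w m).card := by
    rw [Set.ncard_insert_of_notMem hnotmem hfinimg, himg]
    omega
  rw [← this]
  exact Set.ncard_le_ncard hsub (moveRange_finite w)

lemma mv_eq_right (hmono : ∀ k k' : Fin n, k.val ≤ k'.val → w k ≤ w k')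
    {i i' j : Fin n} (h1 : i.val ≤ i'.val) (h2 : i'.val < j.val) (hww : w i = w i') :
    mv w i j = mv w i' j := by
  funext k
  rcases Nat.lt_or_ge k.val i.val with hk | hk
  · rw [mv_out w (by omega), mv_out w (by omega)]
  rcases Nat.lt_or_ge k.val i'.val with hk2 | hk2
  · -- i ≤ k < i' < j
    have hkn : k.val + 1 < n := by have := j.isLt; omega
    have e1 : mv w i j k = w ⟨k.val + 1, hkn⟩ := mv_right w hk (by omega) rfl
    have e2 : mv w i' j k = w k := mv_out w (by omega)
    rw [e1, e2]
    have ha : w k ≤ w ⟨k.val + 1, hkn⟩ := hmono _ _ (by simp)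
    have hb : w ⟨k.val + 1, hkn⟩ ≤ w i' := hmono _ _ (by simp only [Fin.val_mk]; omega)
    have hc : w i ≤ w k := hmono _ _ hk
    omega
  rcases Nat.lt_or_ge k.val j.val with hk3 | hk3
  · -- i' ≤ k < j
    have hkn : k.val + 1 < n := by have := j.isLt; omega
    rw [mv_right w hk hk3 (k' := ⟨k.val + 1, hkn⟩) rfl,
        mv_right w hk2 hk3 (k' := ⟨k.val + 1, hkn⟩) rfl]
  rcases Nat.eq_or_lt_of_le hk3 with hk4 | hk4
  · have : k = j := Fin.ext hk4.symm
    rw [this, mv_at, mv_at, hww]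
  · rw [mv_out w (by omega), mv_out w (by omega)]

lemma mv_eq_left (hmono : ∀ k k' : Fin n, k.val ≤ k'.val → w k ≤ w k')
    {i i' j : Fin n} (h1 : j.val < i.val) (h2 : i.val ≤ i'.val) (hww : w i = w i') :
    mv w i j = mv w i' j := by
  funext k
  rcases Nat.lt_or_ge k.val j.val with hk | hk
  · rw [mv_out w (by omega), mv_out w (by omega)]
  rcases Nat.eq_or_lt_of_le hk with hk1 | hk1
  · have : k = j := Fin.ext hk1.symm
    rw [this, mv_at, mv_at, hww]
  rcases le_or_gt k.val i.val with hk2 | hk2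
  · -- j < k ≤ i
    have hkn : k.val - 1 < n := by have := k.isLt; omega
    rw [mv_left w hk1 hk2 (k' := ⟨k.val - 1, hkn⟩) (by simp only [Fin.val_mk]; omega),
        mv_left w hk1 (by omega) (k' := ⟨k.val - 1, hkn⟩) (by simp only [Fin.val_mk]; omega)]
  rcases le_or_gt k.val i'.val with hk3 | hk3
  · -- i < k ≤ i'
    have hkn : k.val - 1 < n := by have := k.isLt; omega
    have e1 : mv w i j k = w k := mv_out w (by omega)
    have e2 : mv w i' j k = w ⟨k.val - 1, hkn⟩ :=
      mv_left w hk1 hk3 (by simp only [Fin.val_mk]; omega)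
    rw [e1, e2]
    have ha : w ⟨k.val - 1, hkn⟩ ≤ w k := hmono _ _ (by simp only [Fin.val_mk]; omega)
    have hb : w i ≤ w ⟨k.val - 1, hkn⟩ := hmono _ _ (by simp only [Fin.val_mk]; omega)
    have hc : w k ≤ w i' := hmono _ _ (by omega)
    omega
  · rw [mv_out w (by omega), mv_out w (by omega)]

lemma mv_eq_self_right (hmono : ∀ k k' : Fin n, k.val ≤ k'.val → w k ≤ w k')
    {i j : Fin n} (hij : i.val < j.val) (hww : w i = w j) : mv w i j = w := by
  funext k
  rcases Nat.lt_or_ge k.val i.val with hk | hk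
  · exact mv_out w (by omega)
  rcases Nat.lt_or_ge k.val j.val with hk2 | hk2
  · have hkn : k.val + 1 < n := by have := j.isLt; omega
    rw [mv_right w hk hk2 (k' := ⟨k.val + 1, hkn⟩) rfl]
    have ha : w k ≤ w ⟨k.val + 1, hkn⟩ := hmono _ _ (by simp)
    have hb : w ⟨k.val + 1, hkn⟩ ≤ w j := hmono _ _ (by simp only [Fin.val_mk]; omega)
    have hc : w i ≤ w k := hmono _ _ hk
    omega
  rcases Nat.eq_or_lt_of_le hk2 with hk3 | hk3
  · have : k = j := Fin.ext hk3.symm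
    rw [this, mv_at, hww]
  · exact mv_out w (by omega)

lemma mv_eq_self_left (hmono : ∀ k k' : Fin n, k.val ≤ k'.val → w k ≤ w k')
    {i j : Fin n} (hij : j.val < i.val) (hww : w i = w j) : mv w i j = w := by
  funext k
  rcases Nat.lt_or_ge k.val j.val with hk | hk
  · exact mv_out w (by omega)
  rcases Nat.eq_or_lt_of_le hk with hk1 | hk1
  · have : k = j := Fin.ext hk1.symm
    rw [this, mv_at, hww]
  rcases le_or_gt k.val i.val with hk2 | hk2
  · have hkn : k.val - 1 < n := by have := k.isLt; omega
    rw [mv_left w hk1 hk2 (k' := ⟨k.val - 1, hkn⟩) (by simp only [Fin.val_mk]; omega)]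
    have ha : w ⟨k.val - 1, hkn⟩ ≤ w k := hmono _ _ (by simp only [Fin.val_mk]; omega)
    have hb : w j ≤ w ⟨k.val - 1, hkn⟩ := hmono _ _ (by simp only [Fin.val_mk]; omega)
    have hc : w k ≤ w i := hmono _ _ hk2
    omega
  · exact mv_out w (by omega)

end Bounds
section Upper

variable {n : ℕ} {w : Fin n → ℕ} {m : ℕ}

lemma range_subset_upper (hmono : ∀ k k' : Fin n, k.val ≤ k'.val → w k ≤ w k')
    (hval : ∀ p, 1 ≤ w p ∧ w p ≤ m) :
    moveRange w ⊆ insert w (Phi w '' ↑(goodF w m)) := by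
  rintro x ⟨⟨i, j⟩, rfl⟩
  show mv w i j ∈ _
  rcases Nat.lt_trichotomy i.val j.val with hij | hij | hij
  · -- moving to the right
    by_cases hww : w j = w i
    · exact Set.mem_insert_iff.2 (Or.inl (mv_eq_self_right hmono hij hww.symm))
    · have hbf : beforeP w j (w i) := ⟨i, hij, rfl⟩
      have hgood : goodP w m j (w i) := ⟨hval i, fun h => hww h.symm, Or.inl hbf⟩
      refine Set.mem_insert_iff.2 (Or.inr ⟨(j, w i), (mem_goodF w m).2 hgood, ?_⟩)
      rw [Phi_before hbf]
      obtain ⟨hq1, hq2⟩ := lastB_spec w j (w i) hbf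
      have hle : i ≤ lastB w j (w i) hbf := le_lastB w hbf hij rfl
      rw [Fin.le_def] at hle
      exact (mv_eq_right hmono hle hq1 hq2.symm).symm
  · exact Set.mem_insert_iff.2 (Or.inl (by rw [show i = j from Fin.ext hij, mv_self]))
  · -- moving to the left
    by_cases hww : w j = w i
    · exact Set.mem_insert_iff.2 (Or.inl (mv_eq_self_left hmono hij hww.symm))
    have hja : w j < w i := lt_of_le_of_ne (hmono j i (by omega)) hww
    have hnb : ¬ beforeP w j (w i) := by
      rintro ⟨k, hk1, hk2⟩
      have : w k ≤ w j := hmono k j (by omega)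
      omega
    have ha : afterP w j (w i) := ⟨i, hij, rfl⟩
    by_cases ht : tailP w j (w i)
    · -- adjacent swap case
      have hj1 : j.val + 1 < n := by have := i.isLt; omega
      set j1 : Fin n := ⟨j.val + 1, hj1⟩ with hj1def
      have hj1v : j1.val = j.val + 1 := rfl
      have hwj1 : w j1 = w i := ht j1 i (by omega) (by omega) rfl
      have hbf : beforeP w j1 (w j) := ⟨j, by omega, rfl⟩
      have hgood : goodP w m j1 (w j) :=
        ⟨hval j, fun h => hww (h.trans hwj1), Or.inl hbf⟩
      refine Set.mem_insert_iff.2 (Or.inr ⟨(j1, w j), (mem_goodF w m).2 hgood, ?_⟩)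
      rw [Phi_before hbf]
      have hlb : lastB w j1 (w j) hbf = j := by
        obtain ⟨hq1, hq2⟩ := lastB_spec w j1 (w j) hbf
        have h2 := le_lastB w hbf (show j.val < j1.val by omega) rfl
        rw [Fin.le_def] at h2
        exact Fin.ext (by omega)
      rw [hlb]
      funext k
      rcases Nat.lt_or_ge k.val j.val with hk | hk
      · rw [mv_out w (by omega), mv_out w (by omega)]
      rcases Nat.eq_or_lt_of_le hk with hk1 | hk1
      · have hkj : k = j := Fin.ext hk1.symm
        rw [hkj, mv_right w (le_refl _) (show j.val < j1.val by omega) hj1v, mv_at]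
        exact hwj1
      rcases Nat.eq_or_lt_of_le (show j1.val ≤ k.val by omega) with hk2 | hk2
      · have hkj1 : k = j1 := Fin.ext hk2.symm
        rw [hkj1, mv_at,
            mv_left w (show j.val < j1.val by omega) (show j1.val ≤ i.val by omega)
              (k' := j) (by omega)]
      rcases le_or_gt k.val i.val with hk3 | hk3
      · have hkn : k.val - 1 < n := by have := k.isLt; omega
        rw [mv_out w (by omega),
            mv_left w (by omega) hk3 (k' := ⟨k.val - 1, hkn⟩) (by simp only [Fin.val_mk]; omega)]
        have e1 : w k = w i := ht k i (by omega) (by omega) rfl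
        have e2 : w ⟨k.val - 1, hkn⟩ = w i := ht ⟨k.val - 1, hkn⟩ i
          (by simp only [Fin.val_mk]; omega)
          (by simp only [Fin.val_mk]; omega) rfl
        rw [e1, e2]
      · rw [mv_out w (by omega), mv_out w (by omega)]
    · -- genuine right-origin move
      have ho : occP w (w i) := ⟨i, rfl⟩
      have hgood : goodP w m j (w i) := ⟨hval i, fun h => hww h.symm, Or.inr ⟨ha, ht⟩⟩
      refine Set.mem_insert_iff.2 (Or.inr ⟨(j, w i), (mem_goodF w m).2 hgood, ?_⟩)
      rw [Phi_after hnb ho]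
      have hle : i ≤ lastOcc w (w i) ho := le_lastOcc w ho rfl
      rw [Fin.le_def] at hle
      exact (mv_eq_left hmono hij hle (lastOcc_spec w (w i) ho).symm).symm

lemma range_ncard_le (hmono : ∀ k k' : Fin n, k.val ≤ k'.val → w k ≤ w k')
    (hval : ∀ p, 1 ≤ w p ∧ w p ≤ m) :
    (moveRange w).ncard ≤ 1 + (goodF w m).card := by
  classical
  have hfinimg : (Phi w '' ↑(goodF w m)).Finite := ((goodF w m).finite_toSet).image _
  calc (moveRange w).ncard ≤ (insert w (Phi w '' ↑(goodF w m))).ncard :=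
        Set.ncard_le_ncard (range_subset_upper hmono hval) (hfinimg.insert w)
    _ ≤ (Phi w '' ↑(goodF w m)).ncard + 1 := Set.ncard_insert_le _ _
    _ ≤ (goodF w m).card + 1 := by
        have := Set.ncard_image_le (s := (↑(goodF w m) : Set (Fin n × ℕ))) (f := Phi w)
          ((goodF w m).finite_toSet)
        rw [Set.ncard_coe_finset] at this
        omega
    _ = 1 + (goodF w m).card := by omega

end Upper
section StrictMonoClass

variable {n : ℕ}

/-- `sa i` : the strictly monotone map skipping value `i`. -/
def sa (x p : ℕ) : ℕ := if p < x then p else p + 1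

lemma tf_sa {i j p : ℕ} (hj : j < n) (hp : p < n - 1) :
    tf i j (sa j p) = sa i p := by
  unfold tf sa; split_ifs <;> omega

/-- increments along a strictly monotone map between `Fin` types. -/
lemma smono_incr {k : ℕ} {f : Fin k → Fin n} (hf : StrictMono f) :
    ∀ d : ℕ, ∀ p q : Fin k, q.val = p.val + d → (f p).val + d ≤ (f q).val := by
  intro d
  induction d with
  | zero => intro p q h; rw [show q = p from Fin.ext (by omega)]; omega
  | succ d ih =>
    intro p q h
    have hq1 : q.val - 1 < k := by have := q.isLt; omega
    have h1 := ih p ⟨q.val - 1, hq1⟩ (by simp only [Fin.val_mk]; omega)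
    have h2 : f ⟨q.val - 1, hq1⟩ < f q := hf (by rw [Fin.lt_def]; simp only [Fin.val_mk]; omega)
    rw [Fin.lt_def] at h2
    omega

lemma smono_lb {k : ℕ} {f : Fin k → Fin n} (hf : StrictMono f) (p : Fin k) :
    p.val ≤ (f p).val := by
  have h0 : (0 : ℕ) < k := by have := p.isLt; omega
  have := smono_incr hf p.val ⟨0, h0⟩ p (by simp)
  omega

lemma smono_ub {k : ℕ} {f : Fin k → Fin n} (hf : StrictMono f) (p : Fin k) :
    (f p).val + (k - 1 - p.val) ≤ n - 1 := by
  have hlast : k - 1 < k := by have := p.isLt; omega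
  have h1 := smono_incr hf (k - 1 - p.val) p ⟨k - 1, hlast⟩
    (by simp only [Fin.val_mk]; have := p.isLt; omega)
  have h2 : (f ⟨k - 1, hlast⟩).val < n := (f _).isLt
  omega

/-- classification of strictly monotone maps `Fin (n-1) → Fin n` (value form). -/
lemma smono_classify {k : ℕ} (hk : k + 1 = n) (f : Fin k → Fin n) (hf : StrictMono f) :
    ∃ i : Fin n, ∀ p, (f p).val = sa i.val p.val := by
  classical
  have hn : 0 < n := by omega
  have hub : ∀ p : Fin k, (f p).val ≤ p.val + 1 := by
    intro p
    have := smono_ub hf p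
    have := p.isLt
    omega
  have hlb : ∀ p : Fin k, p.val ≤ (f p).val := fun p => smono_lb hf p
  by_cases hall : ∀ p : Fin k, (f p).val = p.val
  · refine ⟨⟨n - 1, by omega⟩, fun p => ?_⟩
    rw [hall p]
    unfold sa
    rw [if_pos (by have := p.isLt; simp only [Fin.val_mk]; omega)]
  · push_neg at hall
    obtain ⟨p₀, hp₀⟩ := hall
    have hex : ∃ v : ℕ, ∃ h : v < k, (f ⟨v, h⟩).val ≠ v :=
      ⟨p₀.val, p₀.isLt, by rw [show (⟨p₀.val, p₀.isLt⟩ : Fin k) = p₀ from Fin.ext rfl]; exact hp₀⟩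
    obtain ⟨hi0lt, hi0ne⟩ := Nat.find_spec hex
    refine ⟨⟨Nat.find hex, by omega⟩, fun p => ?_⟩
    have hmin : ∀ v, v < Nat.find hex → ∀ h : v < k, (f ⟨v, h⟩).val = v := by
      intro v hv h
      by_contra hne
      exact Nat.find_min hex hv ⟨h, hne⟩
    unfold sa
    split_ifs with hlt
    · simp only [Fin.val_mk] at hlt
      have := hmin p.val hlt p.isLt
      rw [show (⟨p.val, p.isLt⟩ : Fin k) = p from Fin.ext rfl] at this
      exact this
    · simp only [Fin.val_mk] at hlt
      push_neg at hlt
      have hfi0 : (f ⟨Nat.find hex, hi0lt⟩).val = Nat.find hex + 1 := by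
        have h1 := hub ⟨Nat.find hex, hi0lt⟩
        have h2 := hlb ⟨Nat.find hex, hi0lt⟩
        simp only [Fin.val_mk] at h1 h2
        omega
      have h3 := smono_incr hf (p.val - Nat.find hex) ⟨Nat.find hex, hi0lt⟩ p
        (by simp only [Fin.val_mk]; omega)
      have h4 := hub p
      omega

end StrictMonoClass
section LcsFacts

variable {n : ℕ} {α : Type*}

def lcsSet (u v : Fin n → α) : Set ℕ :=
  {k | ∃ f g : Fin k → Fin n, StrictMono f ∧ StrictMono g ∧ ∀ p, u (f p) = v (g p)}

lemma lcsLen_eq_sSup (u v : Fin n → α) : lcsLen u v = sSup (lcsSet u v) := rfl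

lemma lcsSet_zero_mem (u v : Fin n → α) : (0 : ℕ) ∈ lcsSet u v := by
  refine ⟨fun p => p.elim0, fun p => p.elim0, ?_, ?_, fun p => p.elim0⟩ <;>
    (intro a; exact a.elim0)

lemma lcsSet_ub (u v : Fin n → α) : ∀ t ∈ lcsSet u v, t ≤ n := by
  rintro t ⟨f, g, hf, -, -⟩
  have := Fintype.card_le_of_injective f hf.injective
  simpa using this

lemma lcsLen_mem (u v : Fin n → α) : lcsLen u v ∈ lcsSet u v :=
  Nat.sSup_mem ⟨0, lcsSet_zero_mem u v⟩ ⟨n, lcsSet_ub u v⟩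

lemma lcsLen_le (u v : Fin n → α) : lcsLen u v ≤ n :=
  lcsSet_ub u v _ (lcsLen_mem u v)

lemma le_lcsLen (u v : Fin n → α) {k : ℕ} (hk : k ∈ lcsSet u v) : k ≤ lcsLen u v :=
  le_csSup ⟨n, lcsSet_ub u v⟩ hk

end LcsFacts

section SphereEq

variable {n r : ℕ}

lemma transloc_at (i j : Fin n) : transloc i j j = i := by
  apply Fin.ext; rw [transloc_val]; unfold tf; split_ifs <;> omega

lemma saF_lt {x p : ℕ} (hx : x < n) (hp : p < n - 1) : sa x p < n := by
  unfold sa; split_ifs <;> omega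

theorem sphere_eq (hn : 0 < n) (σ : Equiv.Perm (Fin n)) :
    multSphere r σ 1 = moveRange (mult r σ) := by
  classical
  ext x
  constructor
  · rintro ⟨π, rfl, hd⟩
    unfold multDist at hd
    rw [lcsLen_eq_sSup] at hd
    have hmem := lcsLen_mem (mult r σ) (mult r π)
    have hLn := lcsLen_le (mult r σ) (mult r π)
    rw [lcsLen_eq_sSup] at hmem hLn
    have hL1 : n - 1 ≤ sSup (lcsSet (mult r σ) (mult r π)) := by omega
    obtain ⟨f, g, hf, hg, hfg⟩ := hmem
    rcases eq_or_lt_of_le hLn with hL | hL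
    · -- identical words
      have hxw : mult r π = mult r σ := by
        funext k
        have hkL : k.val < sSup (lcsSet (mult r σ) (mult r π)) := by
          rw [hL]; exact k.isLt
        set p : Fin (sSup (lcsSet (mult r σ) (mult r π))) := ⟨k.val, hkL⟩ with hpdef
        have hfp : f p = k := by
          apply Fin.ext
          have h1 := smono_lb hf p
          have h2 := smono_ub hf p
          have h3 := p.isLt
          simp only [hpdef, Fin.val_mk] at *
          omega
        have hgp : g p = k := by
          apply Fin.ext
          have h1 := smono_lb hg p
          have h2 := smono_ub hg p
          have h3 := p.isLt
          simp only [hpdef, Fin.val_mk] at *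
          omega
        have := hfg p
        rw [hfp, hgp] at this
        exact this.symm
      exact ⟨(⟨0, hn⟩, ⟨0, hn⟩), by
        show mv (mult r σ) _ _ = mult r π
        rw [mv_self]; exact hxw.symm⟩
    · -- distance exactly one
      have hkk : sSup (lcsSet (mult r σ) (mult r π)) + 1 = n := by omega
      obtain ⟨i, hfi⟩ := smono_classify hkk f hf
      obtain ⟨j, hgj⟩ := smono_classify hkk g hg
      have hoff : ∀ kk : Fin n, kk ≠ j → mult r π kk = mult r σ (transloc i j kk) := by
        intro kk hkk2
        have hkv : kk.val ≠ j.val := fun h => hkk2 (Fin.ext h)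
        have hp : ∃ p : Fin (sSup (lcsSet (mult r σ) (mult r π))),
            sa j.val p.val = kk.val := by
          rcases Nat.lt_or_ge kk.val j.val with h | h
          · refine ⟨⟨kk.val, by have := j.isLt; omega⟩, ?_⟩
            simp only [sa, Fin.val_mk]; split_ifs <;> omega
          · refine ⟨⟨kk.val - 1, by have := kk.isLt; omega⟩, ?_⟩
            simp only [sa, Fin.val_mk]; split_ifs <;> omega
        obtain ⟨p, hp⟩ := hp
        have hgp : g p = kk := Fin.ext (by rw [hgj p, hp])
        have hfp : f p = transloc i j kk := by
          apply Fin.ext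
          rw [hfi p, transloc_val, ← hp]
          exact (tf_sa (n := n) j.isLt (by have := p.isLt; omega)).symm
        rw [← hfp, ← hgp]
        exact (hfg p).symm
      have hsum : ∑ kk, mult r π kk = ∑ kk, mult r σ kk := by
        have e1 : ∑ kk, mult r π kk = ∑ v : Fin n, (v.val / r + 1) :=
          Equiv.sum_comp π (fun v : Fin n => v.val / r + 1)
        have e2 : ∑ kk, mult r σ kk = ∑ v : Fin n, (v.val / r + 1) :=
          Equiv.sum_comp σ (fun v : Fin n => v.val / r + 1)
        rw [e1, e2]
      have hxj : mult r π j = mult r σ i := by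
        have h1 : mult r π j + ∑ kk ∈ Finset.univ.erase j, mult r π kk
            = ∑ kk, mult r π kk :=
          Finset.add_sum_erase _ _ (Finset.mem_univ j)
        have h2 : mult r σ i + ∑ kk ∈ Finset.univ.erase i, mult r σ kk
            = ∑ kk, mult r σ kk :=
          Finset.add_sum_erase _ _ (Finset.mem_univ i)
        have h3 : ∑ kk ∈ Finset.univ.erase j, mult r π kk
            = ∑ kk ∈ Finset.univ.erase j, mult r σ (transloc i j kk) :=
          Finset.sum_congr rfl (fun kk hkk2 => hoff kk (Finset.ne_of_mem_erase hkk2))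
        have h4 : ∑ kk ∈ Finset.univ.erase j, mult r σ (transloc i j kk)
            = ∑ l ∈ Finset.univ.erase i, mult r σ l := by
          refine Finset.sum_bij (fun kk _ => transloc i j kk) ?_ ?_ ?_ ?_
          · intro a ha
            refine Finset.mem_erase.2 ⟨?_, Finset.mem_univ _⟩
            intro hcon
            apply Finset.ne_of_mem_erase ha
            have h5 : transloc i j a = transloc i j j := by
              rw [transloc_at]; exact hcon
            exact (transloc i j).injective h5
          · intro a _ b _ hab
            exact (transloc i j).injective hab
          · intro b hb
            refine ⟨(transloc i j).symm b, ?_, Equiv.apply_symm_apply _ _⟩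
            refine Finset.mem_erase.2 ⟨?_, Finset.mem_univ _⟩
            intro hcon
            apply Finset.ne_of_mem_erase hb
            have h5 := congrArg (transloc i j) hcon
            rw [Equiv.apply_symm_apply, transloc_at] at h5
            exact h5
          · intro a _
            rfl
        omega
      refine ⟨(i, j), ?_⟩
      show mv (mult r σ) i j = mult r π
      funext kk
      by_cases hkk2 : kk = j
      · rw [hkk2, mv_at]
        exact hxj.symm
      · exact (hoff kk hkk2).symm
  · rintro ⟨⟨i, j⟩, hx⟩
    refine ⟨σ * transloc i j, ?_, ?_⟩
    · rw [← hx]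
      funext k
      rfl
    · show multDist r σ (σ * transloc i j) ≤ 1
      unfold multDist
      have hmem : n - 1 ∈ lcsSet (mult r σ) (mult r (σ * transloc i j)) := by
        refine ⟨fun p => ⟨sa i.val p.val, saF_lt i.isLt p.isLt⟩,
                fun p => ⟨sa j.val p.val, saF_lt j.isLt p.isLt⟩, ?_, ?_, ?_⟩
        · intro a b hab
          rw [Fin.lt_def] at hab ⊢
          simp only [Fin.val_mk, sa]
          split_ifs <;> omega
        · intro a b hab
          rw [Fin.lt_def] at hab ⊢
          simp only [Fin.val_mk, sa]
          split_ifs <;> omega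
        · intro p
          have hτ : transloc i j ⟨sa j.val p.val, saF_lt j.isLt p.isLt⟩
              = ⟨sa i.val p.val, saF_lt i.isLt p.isLt⟩ := by
            apply Fin.ext
            rw [transloc_val]
            simp only [Fin.val_mk]
            exact tf_sa (n := n) j.isLt p.isLt
          show mult r σ _ = mult r (σ * transloc i j) _
          have : mult r (σ * transloc i j) ⟨sa j.val p.val, saF_lt j.isLt p.isLt⟩
              = mult r σ (transloc i j ⟨sa j.val p.val, saF_lt j.isLt p.isLt⟩) := rfl
          rw [this, hτ]
      have := le_lcsLen (mult r σ) (mult r (σ * transloc i j)) hmem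
      rw [lcsLen_eq_sSup]
      rw [lcsLen_eq_sSup] at this
      omega

end SphereEq
section Main

variable {n r : ℕ}

lemma mult_apply (σ : Equiv.Perm (Fin n)) (k : Fin n) : mult r σ k = (σ k).val / r + 1 := rfl

lemma mult_one_apply (k : Fin n) : mult r (1 : Equiv.Perm (Fin n)) k = k.val / r + 1 := rfl

lemma mult_val {m : ℕ} (hr : 0 < r) (hnm : n = m * r) (σ : Equiv.Perm (Fin n)) :
    ∀ p, 1 ≤ mult r σ p ∧ mult r σ p ≤ m := by
  intro p
  rw [mult_apply]
  have h1 : (σ p).val < n := (σ p).isLt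
  have h2 : (σ p).val / r < m := by
    rw [Nat.div_lt_iff_lt_mul hr]
    omega
  exact ⟨Nat.le_add_left 1 _, Nat.succ_le_of_lt h2⟩

lemma mult_occ {m : ℕ} (hr : 0 < r) (hnm : n = m * r) (σ : Equiv.Perm (Fin n)) :
    ∀ c, 1 ≤ c → c ≤ m → occP (mult r σ) c := by
  intro c h1 h2
  have hlt : (c - 1) * r < n := by
    rw [hnm]
    exact (Nat.mul_lt_mul_right hr).2 (by omega)
  refine ⟨σ.symm ⟨(c - 1) * r, hlt⟩, ?_⟩
  rw [mult_apply]
  have : σ (σ.symm ⟨(c - 1) * r, hlt⟩) = ⟨(c - 1) * r, hlt⟩ := Equiv.apply_symm_apply _ _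
  rw [this]
  simp only [Fin.val_mk]
  rw [Nat.mul_div_cancel _ hr]
  omega

lemma mult_one_mono : ∀ k k' : Fin n, k.val ≤ k'.val →
    mult r (1 : Equiv.Perm (Fin n)) k ≤ mult r (1 : Equiv.Perm (Fin n)) k' := by
  intro k k' h
  rw [mult_one_apply, mult_one_apply]
  exact Nat.add_le_add_right (Nat.div_le_div_right h) 1

lemma badF_e_ge {m : ℕ} (hr : 0 < r) (hnm : n = m * r) (hm : 1 ≤ m) (hn : 0 < n) :
    m - 1 ≤ (badF (mult r (1 : Equiv.Perm (Fin n))) m).card := by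
  classical
  set e := mult r (1 : Equiv.Perm (Fin n)) with hedef
  have hcard : (Finset.Icc 2 m).card = m - 1 := by rw [Nat.card_Icc]; omega
  rw [← hcard]
  apply Finset.card_le_card_of_injOn
    (f := fun c => ((⟨((c - 1) * r - 1) % n, Nat.mod_lt _ hn⟩ : Fin n), c))
  · intro c hc
    rw [Finset.mem_coe, Finset.mem_Icc] at hc
    obtain ⟨hc2, hcm⟩ := hc
    have hlt : (c - 1) * r - 1 < n := by
      have : (c - 1) * r ≤ m * r := Nat.mul_le_mul_right r (by omega)
      omega
    have hmod : ((c - 1) * r - 1) % n = (c - 1) * r - 1 := Nat.mod_eq_of_lt hlt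
    have hrpos : 1 ≤ (c - 1) * r := by
      have := Nat.mul_le_mul (show 1 ≤ c - 1 by omega) (show 1 ≤ r by omega)
      omega
    -- value of e at the chosen position
    have hediv : ∀ v : ℕ, ∀ h : v < n, e ⟨v, h⟩ = v / r + 1 := fun v h => rfl
    have hval1 : ((c - 1) * r - 1) / r = c - 2 := by
      have h3 : (c - 2 + 1) * r = (c - 1) * r := by congr 1; omega
      have h4 : (c - 2 + 1) * r = (c - 2) * r + r := Nat.succ_mul _ _
      exact Nat.div_eq_of_lt_le (by omega) (by omega)
    beta_reduce
    apply (mem_badF _ _).2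
    refine ⟨⟨by omega, hcm⟩, ?_, ?_, ?_, ?_⟩
    · -- c ≠ e p
      show c ≠ e _
      rw [hediv]
      simp only [Fin.val_mk, hmod, hval1]
      omega
    · -- not before
      rintro ⟨k, hk1, hk2⟩
      simp only [Fin.val_mk, hmod] at hk1
      rw [hediv k.val k.isLt] at hk2
      have : k.val / r ≤ ((c - 1) * r - 1) / r := Nat.div_le_div_right (by omega)
      rw [hval1] at this
      omega
    · -- after
      have hlt2 : (c - 1) * r < n := by
        have ha : c * r ≤ m * r := Nat.mul_le_mul_right r hcm
        have hb : (c - 1) * r < c * r := (Nat.mul_lt_mul_right hr).2 (by omega)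
        omega
      refine ⟨⟨(c - 1) * r, hlt2⟩, ?_, ?_⟩
      · simp only [Fin.val_mk, hmod]; omega
      · rw [hediv]
        simp only [Fin.val_mk]
        rw [Nat.mul_div_cancel _ hr]
        omega
    · -- tail
      intro k₁ k₂ h1 h2 hk₂
      simp only [Fin.val_mk, hmod] at h1
      rw [hediv k₂.val k₂.isLt] at hk₂
      rw [hediv k₁.val k₁.isLt]
      have ha : c - 1 ≤ k₁.val / r := by
        rw [Nat.le_div_iff_mul_le hr]
        omega
      have hb : k₁.val / r ≤ k₂.val / r := Nat.div_le_div_right h2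
      omega
  · intro c hc c' hc' h
    exact congrArg Prod.snd h

end Main

/-- The identity multipermutation minimizes the `r`-regular Ulam sphere of radius 1. -/
theorem multSphere_identity_min {n r : ℕ} (hr : 0 < r) (hdvd : r ∣ n)
    (σ : Equiv.Perm (Fin n)) :
    (multSphere r (1 : Equiv.Perm (Fin n)) 1).ncard ≤ (multSphere r σ 1).ncard := by
  rcases Nat.eq_zero_or_pos n with hn | hn
  · subst hn
    have hall : ∀ τ : Equiv.Perm (Fin 0), multSphere r τ 1 = Set.univ := by
      intro τ
      ext x
      simp only [Set.mem_univ, iff_true]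
      refine ⟨τ, funext fun k => k.elim0, ?_⟩
      show (0 : ℕ) - _ ≤ 1
      omega
    rw [hall, hall]
  · set m := n / r with hmdef
    have hnm : n = m * r := (Nat.div_mul_cancel hdvd).symm
    have hm : 1 ≤ m := by
      rcases Nat.eq_zero_or_pos m with h | h
      · rw [h, Nat.zero_mul] at hnm; omega
      · exact h
    rw [sphere_eq hn, sphere_eq hn]
    have hvalE := mult_val (m := m) hr hnm (1 : Equiv.Perm (Fin n))
    have hvalW := mult_val (m := m) hr hnm σ
    have hoccE := mult_occ (m := m) hr hnm (1 : Equiv.Perm (Fin n))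
    have hoccW := mult_occ (m := m) hr hnm σ
    have hparE := partition_card (mult r (1 : Equiv.Perm (Fin n))) m hvalE hoccE
    have hparW := partition_card (mult r σ) m hvalW hoccW
    have hbadE := badF_e_ge hr hnm hm hn
    have hbadW := badF_card_le (mult r σ) m hvalW hn
    have hgood : (goodF (mult r (1 : Equiv.Perm (Fin n))) m).card ≤ (goodF (mult r σ) m).card := by
      omega
    calc (moveRange (mult r (1 : Equiv.Perm (Fin n)))).ncard
        ≤ 1 + (goodF (mult r (1 : Equiv.Perm (Fin n))) m).card :=
          range_ncard_le mult_one_mono hvalE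
      _ ≤ 1 + (goodF (mult r σ) m).card := by omega
      _ ≤ (moveRange (mult r σ)).ncard := range_ncard_ge hn


end UlamPaper
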